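/- There is an absolute constant C such that for all ν ≥ 1/2 and all r ≥ 2ν, the integral ∫_0^∞ e^{-t} t^{ν-1/2} (1 + it/(2r))^{ν-1/2} dt converges absolutely and (1/Γ(ν+1/2)) ∫_0^∞ e^{-t} t^{ν-1/2} |(1 + it/(2r))^{ν-1/2}| dt ≤ C · 2^ν. -/

import Mathlib

open MeasureTheory

lemma macdonald_norm_bound {ν r t : ℝ} (hν : 1 / 2 ≤ ν) (hr : 2 * ν ≤ r) (ht : 0 ≤ t) :
    ‖(1 + Complex.I * (t : ℂ) / (2 * (r : ℂ))) ^ ((ν : ℂ) - 1 / 2)‖ ≤ Real.exp (t / 4) := by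
  have hr0 : (0:ℝ) < r := by linarith
  set z : ℂ := 1 + Complex.I * (t : ℂ) / (2 * (r : ℂ)) with hz
  have hzre : z.re = 1 := by simp [hz, Complex.div_re]
  have habs : ‖z‖ ≤ 1 + t / (2 * r) := by
    rw [hz]
    calc ‖(1 + Complex.I * (t : ℂ) / (2 * (r : ℂ)))‖
        ≤ ‖(1:ℂ)‖ + ‖(Complex.I * (t : ℂ) / (2 * (r : ℂ)))‖ :=
          norm_add_le _ _
      _ = 1 + t / (2 * r) := by
          simp [norm_div, Complex.norm_real, abs_of_nonneg ht, abs_of_pos hr0,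
            abs_of_pos (by positivity : (0:ℝ) < 2*r)]
  have hnorm : ‖z ^ ((ν : ℂ) - 1 / 2)‖ = ‖z‖ ^ (ν - 1 / 2) := by
    have h : ((ν : ℂ) - 1 / 2) = ((ν - 1/2 : ℝ) : ℂ) := by push_cast; ring
    rw [h]
    exact Complex.norm_cpow_real z (ν - 1/2)
  rw [hnorm]
  have hνpos : 0 ≤ ν - 1/2 := by linarith
  calc ‖z‖ ^ (ν - 1 / 2)
      ≤ (1 + t / (2 * r)) ^ (ν - 1/2) :=
        Real.rpow_le_rpow (norm_nonneg z) habs hνpos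
    _ ≤ Real.exp (t / (2*r)) ^ (ν - 1/2) := by
        apply Real.rpow_le_rpow (by positivity) _ hνpos
        linarith [Real.add_one_le_exp (t / (2*r))]
    _ = Real.exp ((ν - 1/2) * (t / (2*r))) := by
        rw [← Real.exp_mul, mul_comm]
    _ ≤ Real.exp (t / 4) := by
        apply Real.exp_le_exp.mpr
        rw [mul_div_assoc', div_le_div_iff₀ (by positivity) (by norm_num)]
        nlinarith [mul_nonneg ht (by linarith : (0:ℝ) ≤ r - 2*ν)]

/-- There is an absolute constant `C` such that for all `ν ≥ 1/2` and `r ≥ 2ν`, the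
integral `∫_0^∞ e^{-t} t^{ν-1/2} (1 + it/(2r))^{ν-1/2} dt` converges absolutely and
`(1/Γ(ν+1/2)) ∫_0^∞ e^{-t} t^{ν-1/2} |(1 + it/(2r))^{ν-1/2}| dt ≤ C · 2^ν`. -/
theorem macdonald_integral_bound :
    ∃ C : ℝ, 0 < C ∧ ∀ ν r : ℝ, 1 / 2 ≤ ν → 2 * ν ≤ r →
      IntegrableOn (fun t : ℝ =>
          ((Real.exp (-t) * t ^ (ν - 1 / 2) : ℝ) : ℂ) *
            (1 + Complex.I * (t : ℂ) / (2 * (r : ℂ))) ^ ((ν : ℂ) - 1 / 2))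
        (Set.Ioi 0) volume ∧
      (1 / Real.Gamma (ν + 1 / 2)) *
          (∫ t in Set.Ioi (0 : ℝ), Real.exp (-t) * t ^ (ν - 1 / 2) *
            ‖(1 + Complex.I * (t : ℂ) / (2 * (r : ℂ))) ^ ((ν : ℂ) - 1 / 2)‖) ≤
        C * 2 ^ ν := by
  refine ⟨2, by norm_num, fun ν r hν hr => ?_⟩
  have hr0 : (0:ℝ) < r := by linarith
  have hΓ : 0 < Real.Gamma (ν + 1/2) := Real.Gamma_pos_of_pos (by linarith)
  set f : ℝ → ℂ := fun t : ℝ =>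
      ((Real.exp (-t) * t ^ (ν - 1 / 2) : ℝ) : ℂ) *
        (1 + Complex.I * (t : ℂ) / (2 * (r : ℂ))) ^ ((ν : ℂ) - 1 / 2) with hf
  set g : ℝ → ℝ := fun t : ℝ => t ^ (ν + 1/2 - 1) * Real.exp (-(3/4 * t)) with hg
  have hdom : IntegrableOn g (Set.Ioi 0) volume := by
    have h := integrableOn_rpow_mul_exp_neg_mul_rpow (p := 1) (s := ν + 1/2 - 1) (b := 3/4)
      (by linarith) one_pos (by norm_num)
    refine h.congr_fun (fun t ht => ?_) measurableSet_Ioi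
    simp [hg, Real.rpow_one, neg_mul]
  have hint : ∫ t : ℝ in Set.Ioi 0, g t
      = (1 / (3/4)) ^ (ν + 1/2) * Real.Gamma (ν + 1/2) :=
    Real.integral_rpow_mul_exp_neg_mul_Ioi (by linarith) (by norm_num)
  have hnorm_eq : ∀ t ∈ Set.Ioi (0:ℝ), ‖f t‖ =
      Real.exp (-t) * t ^ (ν - 1/2) *
        ‖(1 + Complex.I * (t : ℂ) / (2 * (r : ℂ))) ^ ((ν : ℂ) - 1 / 2)‖ := by
    intro t ht
    have ht0 : (0:ℝ) < t := ht
    rw [hf]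
    simp only [norm_mul, Complex.norm_real, Real.norm_eq_abs, abs_mul, Real.abs_exp]
    rw [abs_of_nonneg (Real.rpow_nonneg ht0.le _)]
  have hptw : ∀ t ∈ Set.Ioi (0:ℝ), ‖f t‖ ≤ g t := by
    intro t ht
    have ht0 : (0:ℝ) < t := ht
    rw [hnorm_eq t ht]
    have hb := macdonald_norm_bound hν hr ht0.le
    calc Real.exp (-t) * t ^ (ν - 1/2) *
          ‖(1 + Complex.I * (t : ℂ) / (2 * (r : ℂ))) ^ ((ν : ℂ) - 1 / 2)‖
        ≤ Real.exp (-t) * t ^ (ν - 1/2) * Real.exp (t/4) :=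
          mul_le_mul_of_nonneg_left hb (by positivity)
      _ = g t := by
          rw [hg]
          simp only
          rw [mul_comm (t ^ (ν + 1/2 - 1)), mul_comm (Real.exp (-t)), mul_assoc,
            ← Real.exp_add]
          norm_num
          ring_nf
  have hmeas : AEStronglyMeasurable f (volume.restrict (Set.Ioi 0)) := by
    apply ContinuousOn.aestronglyMeasurable _ measurableSet_Ioi
    apply ContinuousOn.mul
    · apply Continuous.comp_continuousOn Complex.continuous_ofReal
      apply ContinuousOn.mul (Real.continuous_exp.comp continuous_neg).continuousOn
      intro t ht
      exact (Real.continuousAt_rpow_const t _ (Or.inl (ne_of_gt ht))).continuousWithinAt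
    · intro t ht
      apply ContinuousWithinAt.cpow _ continuousWithinAt_const _
      · exact (Continuous.continuousWithinAt (by continuity))
      · left
        simp [Complex.add_re, Complex.div_re]
  have hfint : IntegrableOn f (Set.Ioi 0) volume := by
    apply Integrable.mono' hdom hmeas
    rw [ae_restrict_iff' measurableSet_Ioi]
    exact Filter.Eventually.of_forall hptw
  refine ⟨hfint, ?_⟩
  have hmono : (∫ t in Set.Ioi (0 : ℝ), Real.exp (-t) * t ^ (ν - 1 / 2) *
      ‖(1 + Complex.I * (t : ℂ) / (2 * (r : ℂ))) ^ ((ν : ℂ) - 1 / 2)‖)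
      ≤ ∫ t in Set.Ioi (0:ℝ), g t := by
    apply setIntegral_mono_on _ hdom measurableSet_Ioi
    · intro t ht
      rw [← hnorm_eq t ht]
      exact hptw t ht
    · exact IntegrableOn.congr_fun hfint.norm hnorm_eq measurableSet_Ioi
  rw [hint] at hmono
  have key : (1 / Real.Gamma (ν + 1 / 2)) *
      (∫ t in Set.Ioi (0 : ℝ), Real.exp (-t) * t ^ (ν - 1 / 2) *
        ‖(1 + Complex.I * (t : ℂ) / (2 * (r : ℂ))) ^ ((ν : ℂ) - 1 / 2)‖)
      ≤ (1 / (3/4)) ^ (ν + 1/2) := by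
    rw [one_div, inv_mul_le_iff₀ hΓ]
    exact hmono.trans_eq (mul_comm _ _)
  refine key.trans ?_
  have h1 : ((1:ℝ) / (3/4)) ^ (ν + 1/2) ≤ (2:ℝ) ^ (ν + 1/2) := by
    apply Real.rpow_le_rpow (by norm_num) (by norm_num) (by linarith)
  refine h1.trans ?_
  have h2 : (2:ℝ) ^ ((1:ℝ)/2) ≤ 2 := by
    calc (2:ℝ) ^ ((1:ℝ)/2) ≤ 2 ^ (1:ℝ) :=
          Real.rpow_le_rpow_of_exponent_le one_le_two (by norm_num)
      _ = 2 := Real.rpow_one 2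
  calc (2:ℝ) ^ (ν + 1/2) = 2 ^ ν * 2 ^ ((1:ℝ)/2) := by
        rw [Real.rpow_add two_pos]
    _ ≤ 2 ^ ν * 2 := mul_le_mul_of_nonneg_left h2 (Real.rpow_nonneg (by norm_num) ν)
    _ = 2 * 2 ^ ν := mul_comm _ _
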